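/- Let a > 1 be an integer and φ the golden ratio. Then the fractional parts of n·log_φ(a), for n = 1, 2, 3, ..., are equidistributed in [0,1]. -/

import Mathlib

open scoped Classical

/-- A sequence of reals has equidistributed fractional parts if for every
`β ∈ [0,1]`, the natural density of `{n : {x_n} ≤ β}` equals `β`. -/
def EquidistFract (x : ℕ → ℝ) : Prop :=
  ∀ β ∈ Set.Icc (0 : ℝ) 1,
    Filter.Tendsto
      (fun N : ℕ =>
        (((Finset.Icc 1 N).filter (fun n => Int.fract (x n) ≤ β)).card : ℝ) / N)
      Filter.atTop (nhds β)

section WeylAux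

open Real in
lemma irrational_log_div_log_gold {a : ℕ} (ha : 1 < a) :
    Irrational (Real.log a / Real.log goldenRatio) := by
  have hgold1 : (1:ℝ) < goldenRatio := one_lt_goldenRatio
  have hlogφ : 0 < Real.log goldenRatio := Real.log_pos hgold1
  have hloga : 0 < Real.log a := Real.log_pos (by exact_mod_cast ha)
  rw [Irrational]
  rintro ⟨q, hq⟩
  have hq' : Real.log a = (q : ℝ) * Real.log goldenRatio := by
    field_simp at hq; linarith [hq]
  -- q > 0
  have hqpos : 0 < q := by
    by_contra h
    push_neg at h
    have : (q:ℝ) ≤ 0 := by exact_mod_cast h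
    nlinarith
  -- multiply by den
  have hden : (0:ℝ) < (q.den : ℝ) := by positivity
  have hkey : ((a : ℝ)) ^ (q.den : ℕ) = goldenRatio ^ (q.num) := by
    have h1 : Real.log ((a:ℝ) ^ (q.den:ℕ)) = Real.log (goldenRatio ^ q.num) := by
      rw [Real.log_pow, Real.log_zpow]
      have : ((q.den : ℝ)) * ((q:ℝ) * Real.log goldenRatio) = (q.num : ℝ) * Real.log goldenRatio := by
        have : ((q.den:ℝ)) * (q:ℝ) = (q.num : ℝ) := by
          push_cast [← Rat.cast_def]
          exact_mod_cast congrArg (Rat.cast (K := ℝ)) (by rw [mul_comm]; exact Rat.mul_den_eq_num q)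
        nlinarith [this]
      rw [hq'] at *
      push_cast
      linarith [this]
    have hpos1 : (0:ℝ) < (a:ℝ) ^ (q.den:ℕ) := by positivity
    have hpos2 : (0:ℝ) < goldenRatio ^ q.num := zpow_pos (by linarith) _
    calc (a:ℝ)^(q.den:ℕ) = Real.exp (Real.log ((a:ℝ)^(q.den:ℕ))) := (Real.exp_log hpos1).symm
      _ = Real.exp (Real.log (goldenRatio ^ q.num)) := by rw [h1]
      _ = goldenRatio ^ q.num := Real.exp_log hpos2
  -- p = q.num > 0
  have hnum : 0 < q.num := Rat.num_pos.mpr hqpos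
  set m : ℕ := q.num.toNat - 1 with hm
  have hmn : q.num = ((m + 1 : ℕ) : ℤ) := by omega
  have hzp : goldenRatio ^ q.num = goldenRatio ^ (m+1 : ℕ) := by
    rw [hmn, zpow_natCast]
  have hfib : goldenRatio ^ (m+1:ℕ) = goldenRatio * (Nat.fib (m+1) : ℝ) + (Nat.fib m : ℝ) :=
    (goldenRatio_mul_fib_succ_add_fib m).symm
  have hirr : Irrational (goldenRatio * (Nat.fib (m+1) : ℝ) + (Nat.fib m : ℝ)) := by
    have h1 : Irrational (goldenRatio * (Nat.fib (m+1) : ℝ)) := by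
      have := goldenRatio_irrational
      have hne : (Nat.fib (m+1)) ≠ 0 := (Nat.fib_pos.mpr (Nat.succ_pos m)).ne'
      exact (this.mul_natCast hne)
    exact h1.add_natCast _
  rw [← hfib, ← hzp, ← hkey] at hirr
  have : ¬ Irrational ((a:ℝ) ^ (q.den:ℕ)) := by
    have : ((a:ℝ))^(q.den:ℕ) = ((a ^ q.den : ℕ) : ℝ) := by push_cast; ring
    rw [this]
    exact Nat.not_irrational _
  exact this hirr


open Filter Finset MeasureTheory Real Topology

attribute [local instance] ZeroLEOneClass.factZeroLtOne

noncomputable section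

local notation "𝕋" => AddCircle (1 : ℝ)

lemma exp_ne_one_of_irr {θ : ℝ} (hθ : Irrational θ) :
    Complex.exp (2 * Real.pi * Complex.I * θ) ≠ 1 := by
  intro h
  rw [Complex.exp_eq_one_iff] at h
  obtain ⟨n, hn⟩ := h
  have h2 : (2 * (Real.pi:ℂ) * Complex.I) ≠ 0 := by
    simp [Real.pi_ne_zero, Complex.I_ne_zero]
  have hθn : (θ : ℂ) = (n : ℂ) := by
    have : (2 * (Real.pi:ℂ) * Complex.I) * θ = (2 * (Real.pi:ℂ) * Complex.I) * n := by
      rw [hn]; ring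
    exact mul_left_cancel₀ h2 this
  have : θ = (n : ℝ) := by exact_mod_cast hθn
  exact hθ.ne_int n this

lemma integrable_continuousMap (f : C(𝕋, ℂ)) : Integrable (fun x => f x) (volume : Measure 𝕋) := by
  have hcs : HasCompactSupport (fun x => f x) :=
    IsCompact.of_isClosed_subset isCompact_univ (isClosed_tsupport _) (Set.subset_univ _)
  exact f.continuous.integrable_of_hasCompactSupport hcs

lemma integral_fourier_eq_zero {k : ℤ} (hk : k ≠ 0) :
    (∫ x : 𝕋, fourier k x) = 0 := by
  rw [← AddCircle.integral_preimage (1:ℝ) 0 (fun x => fourier k x)]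
  have h1 : ∀ x : ℝ, fourier k (x : 𝕋) = Complex.exp ((2 * Real.pi * Complex.I * k) * x) := by
    intro x
    rw [fourier_coe_apply]
    push_cast
    ring_nf
  rw [show Set.Ioc (0:ℝ) (0+1) = Set.Ioc (0:ℝ) 1 by norm_num]
  have : (∫ x in Set.Ioc (0:ℝ) 1, fourier k (x : 𝕋)) =
      ∫ x in (0:ℝ)..1, Complex.exp ((2 * Real.pi * Complex.I * k) * x) := by
    rw [intervalIntegral.integral_of_le (by norm_num : (0:ℝ) ≤ 1)]
    exact setIntegral_congr_fun measurableSet_Ioc (fun x _ => h1 x)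
  rw [this]
  have hc : (2 * (Real.pi:ℂ) * Complex.I * k) ≠ 0 := by
    simp [Real.pi_ne_zero, Complex.I_ne_zero, hk]
  rw [integral_exp_mul_complex hc]
  have h1' : Complex.exp (2 * (Real.pi:ℂ) * Complex.I * k * ((1:ℝ):ℂ)) = 1 := by
    push_cast
    rw [mul_one]
    rw [← Complex.exp_int_mul_two_pi_mul_I k]
    ring_nf
  have h0' : Complex.exp (2 * (Real.pi:ℂ) * Complex.I * k * ((0:ℝ):ℂ)) = 1 := by
    push_cast
    rw [mul_zero, Complex.exp_zero]
  rw [h1', h0', sub_self, zero_div]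

lemma weyl_fourier {α : ℝ} (hα : Irrational α) (k : ℤ) :
    Tendsto (fun N : ℕ => (∑ n ∈ range N, fourier k ((n * α : ℝ) : 𝕋)) / N)
      atTop (𝓝 (∫ x : 𝕋, fourier k x)) := by
  rcases eq_or_ne k 0 with rfl | hk
  · have h1 : ∀ N : ℕ, (∑ n ∈ range N, fourier (0:ℤ) ((n * α : ℝ) : 𝕋)) = (N : ℂ) := by
      intro N; simp [fourier_zero]
    have h2 : (∫ x : 𝕋, fourier (0:ℤ) x) = 1 := by
      simp only [fourier_zero]
      rw [integral_const]
      simp [UnitAddCircle.measure_univ, Measure.real]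
    rw [h2]
    have : ∀ᶠ N : ℕ in atTop, (∑ n ∈ range N, fourier (0:ℤ) ((n * α : ℝ) : 𝕋)) / N = 1 := by
      filter_upwards [eventually_ge_atTop 1] with N hN
      rw [h1]
      have hN0 : (N : ℂ) ≠ 0 := by
        exact_mod_cast Nat.one_le_iff_ne_zero.mp hN
      field_simp
    exact Tendsto.congr' (this.mono fun N h => h.symm) tendsto_const_nhds
  · rw [integral_fourier_eq_zero hk]
    set z : ℂ := Complex.exp (2 * Real.pi * Complex.I * (((k : ℝ) * α : ℝ) : ℂ)) with hz
    have hz1 : z ≠ 1 := exp_ne_one_of_irr (hα.intCast_mul hk)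
    have hzn : ∀ n : ℕ, fourier k ((n * α : ℝ) : 𝕋) = z ^ n := by
      intro n
      rw [fourier_coe_apply, hz, ← Complex.exp_nat_mul]
      push_cast
      ring_nf
    have habs : ∀ N : ℕ, ‖∑ n ∈ range N, fourier k ((n * α : ℝ) : 𝕋)‖ ≤ 2 / ‖z - 1‖ := by
      intro N
      have hsum : (∑ n ∈ range N, fourier k ((n * α : ℝ) : 𝕋)) = (z ^ N - 1) / (z - 1) := by
        rw [Finset.sum_congr rfl (fun n _ => hzn n)]
        exact geom_sum_eq hz1 N
      rw [hsum, norm_div]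
      have hz_abs : ‖z‖ = 1 := by
        have harg : (2 * (Real.pi:ℂ) * Complex.I * (((k : ℝ) * α : ℝ) : ℂ))
            = ((2 * Real.pi * ((k:ℝ) * α) : ℝ) : ℂ) * Complex.I := by
          push_cast; ring
        rw [hz, harg, Complex.norm_exp_ofReal_mul_I]
      have hnum : ‖z ^ N - 1‖ ≤ 2 := by
        calc ‖z ^ N - 1‖ ≤ ‖z ^ N‖ + ‖(1:ℂ)‖ := norm_sub_le _ _
          _ = 1 + 1 := by rw [norm_pow, hz_abs, one_pow, norm_one]
          _ = 2 := by norm_num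
      have hden : 0 < ‖z - 1‖ := norm_sub_pos_iff.mpr hz1
      exact div_le_div_of_nonneg_right hnum hden.le |>.trans_eq rfl
    have hlim : Tendsto (fun N : ℕ => (2 / ‖z - 1‖) / (N:ℝ)) atTop (𝓝 0) :=
      tendsto_const_nhds.div_atTop tendsto_natCast_atTop_atTop
    apply squeeze_zero_norm _ hlim
    intro N
    rcases Nat.eq_zero_or_pos N with rfl | hN
    · simp
    · rw [norm_div]
      have h1 : ‖((N:ℕ):ℂ)‖ = (N:ℝ) := by simp
      rw [h1]
      have hNpos : (0:ℝ) < N := by exact_mod_cast hN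
      exact (div_le_div_iff_of_pos_right hNpos).mpr (habs N)

lemma weyl_span {α : ℝ} (hα : Irrational α) {f : C(𝕋, ℂ)}
    (hf : f ∈ Submodule.span ℂ (Set.range (@fourier 1))) :
    Tendsto (fun N : ℕ => (∑ n ∈ range N, f ((n * α : ℝ) : 𝕋)) / N)
      atTop (𝓝 (∫ x : 𝕋, f x)) := by
  induction hf using Submodule.span_induction with
  | mem g hg =>
    obtain ⟨k, rfl⟩ := hg
    exact weyl_fourier hα k
  | zero => simp [tendsto_const_nhds]
  | add g h _ _ hg hh =>
    have := hg.add hh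
    have hint : (∫ x : 𝕋, (g + h) x) = (∫ x : 𝕋, g x) + ∫ x : 𝕋, h x := by
      simp only [ContinuousMap.add_apply]
      exact integral_add (integrable_continuousMap g) (integrable_continuousMap h)
    rw [hint]
    apply this.congr
    intro N
    simp [Finset.sum_add_distrib, add_div]
  | smul c g _ hg =>
    have := hg.const_mul c
    have hint : (∫ x : 𝕋, (c • g) x) = c * ∫ x : 𝕋, g x := by
      simp only [ContinuousMap.smul_apply, smul_eq_mul]
      rw [integral_const_mul]
    rw [hint]
    apply this.congr
    intro N
    simp only [ContinuousMap.smul_apply, smul_eq_mul]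
    rw [← Finset.mul_sum, mul_div_assoc]

lemma weyl_continuous {α : ℝ} (hα : Irrational α) (f : C(𝕋, ℂ)) :
    Tendsto (fun N : ℕ => (∑ n ∈ range N, f ((n * α : ℝ) : 𝕋)) / N)
      atTop (𝓝 (∫ x : 𝕋, f x)) := by
  rw [Metric.tendsto_atTop]
  intro ε hε
  -- find p in the span with dist f p < ε/4
  have hdense : f ∈ closure ((Submodule.span ℂ (Set.range (@fourier 1)) : Submodule ℂ C(𝕋, ℂ)) : Set C(𝕋, ℂ)) := by
    have := span_fourier_closure_eq_top (T := 1)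
    have : f ∈ (Submodule.span ℂ (Set.range (@fourier 1))).topologicalClosure := by
      rw [this]; trivial
    exact this
  obtain ⟨p, hp_mem, hp_close⟩ := Metric.mem_closure_iff.mp hdense (ε/4) (by linarith)
  have hp : Tendsto (fun N : ℕ => (∑ n ∈ range N, p ((n * α : ℝ) : 𝕋)) / N)
      atTop (𝓝 (∫ x : 𝕋, p x)) := weyl_span hα hp_mem
  rw [Metric.tendsto_atTop] at hp
  obtain ⟨M, hM⟩ := hp (ε/4) (by linarith)
  refine ⟨max M 1, fun N hN => ?_⟩
  have hN1 : 1 ≤ N := le_trans (le_max_right M 1) hN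
  have hNM : M ≤ N := le_trans (le_max_left M 1) hN
  have hNpos : (0:ℝ) < N := by exact_mod_cast hN1
  have key : ∀ x : 𝕋, ‖f x - p x‖ ≤ ε/4 := by
    intro x
    calc ‖f x - p x‖ = dist (f x) (p x) := (dist_eq_norm _ _).symm
      _ ≤ dist f p := ContinuousMap.dist_apply_le_dist x
      _ ≤ ε/4 := hp_close.le
  have h1 : dist ((∑ n ∈ range N, f ((n * α : ℝ) : 𝕋)) / N)
      ((∑ n ∈ range N, p ((n * α : ℝ) : 𝕋)) / N) ≤ ε/4 := by
    rw [dist_eq_norm, div_sub_div_same, norm_div, ← Finset.sum_sub_distrib]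
    have : ‖∑ n ∈ range N, (f ((n * α : ℝ) : 𝕋) - p ((n * α : ℝ) : 𝕋))‖ ≤ N * (ε/4) := by
      calc ‖∑ n ∈ range N, (f ((n * α : ℝ) : 𝕋) - p ((n * α : ℝ) : 𝕋))‖
          ≤ ∑ n ∈ range N, ‖f ((n * α : ℝ) : 𝕋) - p ((n * α : ℝ) : 𝕋)‖ := norm_sum_le _ _
        _ ≤ ∑ _n ∈ range N, (ε/4) := Finset.sum_le_sum (fun n _ => key _)
        _ = N * (ε/4) := by rw [Finset.sum_const, card_range, nsmul_eq_mul]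
    have hNnorm : ‖((N:ℕ):ℂ)‖ = (N:ℝ) := by simp
    rw [hNnorm]
    rw [div_le_iff₀ hNpos]
    calc ‖∑ n ∈ range N, (f ((n * α : ℝ) : 𝕋) - p ((n * α : ℝ) : 𝕋))‖ ≤ N * (ε/4) := this
      _ = ε/4 * N := by ring
  have h2 : dist (∫ x : 𝕋, p x) (∫ x : 𝕋, f x) ≤ ε/4 := by
    rw [dist_eq_norm, ← integral_sub (integrable_continuousMap p) (integrable_continuousMap f)]
    have := norm_integral_le_of_norm_le_const
      (C := ε/4) (μ := (volume : Measure 𝕋)) (f := fun x => p x - f x) ?_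
    · calc ‖∫ x : 𝕋, (p x - f x)‖ ≤ ε/4 * (volume (Set.univ : Set 𝕋)).toReal := this
        _ = ε/4 := by rw [UnitAddCircle.measure_univ]; simp
    · filter_upwards with x
      rw [norm_sub_rev]
      exact key x
  calc dist ((∑ n ∈ range N, f ((n * α : ℝ) : 𝕋)) / N) (∫ x : 𝕋, f x)
      ≤ dist ((∑ n ∈ range N, f ((n * α : ℝ) : 𝕋)) / N)
          ((∑ n ∈ range N, p ((n * α : ℝ) : 𝕋)) / N)
        + dist ((∑ n ∈ range N, p ((n * α : ℝ) : 𝕋)) / N) (∫ x : 𝕋, f x) := dist_triangle _ _ _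
    _ ≤ ε/4 + (dist ((∑ n ∈ range N, p ((n * α : ℝ) : 𝕋)) / N) (∫ x : 𝕋, p x)
        + dist (∫ x : 𝕋, p x) (∫ x : 𝕋, f x)) := by
        gcongr
        exact dist_triangle _ _ _
    _ < ε := by
        have h3 := hM N hNM
        linarith

lemma coe_fract_eq (x : ℝ) : ((Int.fract x : ℝ) : 𝕋) = ((x : ℝ) : 𝕋) := by
  rw [QuotientAddGroup.eq_iff_sub_mem]
  refine AddSubgroup.mem_zmultiples_iff.mpr ⟨-⌊x⌋, ?_⟩
  rw [zsmul_eq_mul]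
  push_cast [Int.fract]
  ring

lemma weyl_real {α : ℝ} (hα : Irrational α) {g : ℝ → ℝ} (hg : Continuous g) (hper : g 0 = g 1) :
    Tendsto (fun N : ℕ => (∑ n ∈ range N, g (Int.fract (n * α))) / N)
      atTop (𝓝 (∫ t in (0:ℝ)..1, g t)) := by
  set G : C(𝕋, ℂ) := ⟨AddCircle.liftIco 1 0 (fun t => (g t : ℂ)),
    AddCircle.liftIco_zero_continuous (by exact_mod_cast congrArg Complex.ofReal hper)
      (Continuous.continuousOn (by continuity))⟩ with hGdef
  have hG : ∀ x : ℝ, G ((x : ℝ) : 𝕋) = (g (Int.fract x) : ℂ) := by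
    intro x
    rw [← coe_fract_eq x, hGdef]
    simp only [ContinuousMap.coe_mk]
    exact AddCircle.liftIco_zero_coe_apply ⟨Int.fract_nonneg x, Int.fract_lt_one x⟩
  have hint : (∫ x : 𝕋, G x) = (Complex.ofReal (∫ t in (0:ℝ)..1, g t)) := by
    rw [← AddCircle.integral_preimage (1:ℝ) 0 (fun x => G x)]
    rw [show (0:ℝ) + 1 = 1 by norm_num]
    have heq : ∀ x ∈ Set.Ioc (0:ℝ) 1, G ((x : ℝ) : 𝕋) = (g x : ℂ) := by
      intro x hx
      rw [hG]
      rcases eq_or_lt_of_le hx.2 with h1 | h1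
      · rw [h1, Int.fract_one, ← hper]
      · rw [Int.fract_eq_self.mpr ⟨hx.1.le, h1⟩]
    rw [setIntegral_congr_fun measurableSet_Ioc heq,
      ← intervalIntegral.integral_of_le (by norm_num : (0:ℝ) ≤ 1),
      intervalIntegral.integral_ofReal]
  have h := weyl_continuous hα G
  rw [hint] at h
  have h2 := (Complex.continuous_re.tendsto _).comp h
  simp only [Complex.ofReal_re] at h2
  apply h2.congr
  intro N
  simp only [Function.comp_apply]
  rw [show (∑ n ∈ range N, G (((n : ℝ) * α : ℝ) : 𝕋)) = ((∑ n ∈ range N, g (Int.fract (n * α)) : ℝ) : ℂ) by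
    push_cast [hG]; rfl]
  rw [show ((N:ℂ)) = ((N:ℝ):ℂ) by push_cast; rfl]
  rw [← Complex.ofReal_div, Complex.ofReal_re]

lemma avg_shift {F : ℕ → ℝ} {L : ℝ}
    (h : Tendsto (fun N : ℕ => (∑ n ∈ range N, F n) / N) atTop (𝓝 L)) :
    Tendsto (fun N : ℕ => (∑ n ∈ Finset.Icc 1 N, F n) / N) atTop (𝓝 L) := by
  have hsum : ∀ N : ℕ, (∑ n ∈ Finset.Icc 1 N, F n) = (∑ n ∈ range (N+1), F n) - F 0 := by
    intro N
    rw [Finset.range_eq_Ico, Finset.sum_eq_sum_Ico_succ_bot (Nat.succ_pos N)]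
    rw [show Finset.Ico 1 (N+1) = Finset.Icc 1 N from Finset.Ico_add_one_right_eq_Icc 1 N]
    ring
  have hA : Tendsto (fun N : ℕ => (∑ n ∈ range (N+1), F n) / ((N:ℝ)+1)) atTop (𝓝 L) := by
    have := h.comp (tendsto_add_atTop_nat 1)
    apply this.congr
    intro N
    simp only [Function.comp_apply]
    push_cast
    ring_nf
  have hB : Tendsto (fun N : ℕ => ((N:ℝ)+1)/(N:ℝ)) atTop (𝓝 1) := by
    have h1 : Tendsto (fun N : ℕ => 1 + 1/(N:ℝ)) atTop (𝓝 (1 + 0)) :=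
      tendsto_const_nhds.add (tendsto_const_nhds.div_atTop tendsto_natCast_atTop_atTop)
    rw [add_zero] at h1
    apply h1.congr'
    filter_upwards [eventually_ge_atTop 1] with N hN
    have hN0 : (N:ℝ) ≠ 0 := by positivity
    field_simp
  have hC : Tendsto (fun N : ℕ => F 0 / (N:ℝ)) atTop (𝓝 0) :=
    tendsto_const_nhds.div_atTop tendsto_natCast_atTop_atTop
  have hcomb := (hA.mul hB).sub hC
  rw [mul_one, sub_zero] at hcomb
  apply hcomb.congr'
  filter_upwards [eventually_ge_atTop 1] with N hN
  have hN0 : (N:ℝ) ≠ 0 := by positivity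
  have hN1 : (N:ℝ) + 1 ≠ 0 := by positivity
  rw [hsum]
  field_simp

section approx

variable (β ε : ℝ)

noncomputable def gfun (t : ℝ) : ℝ := max 0 (min (min 1 (t/ε)) ((β - t)/ε))
noncomputable def hfun (t : ℝ) : ℝ := min 1 (max (max 0 ((β + ε - t)/ε)) ((t - (1 - ε))/ε))

lemma gfun_cont : Continuous (gfun β ε) :=
  continuous_const.max ((continuous_const.min (continuous_id.div_const ε)).min
    ((continuous_const.sub continuous_id).div_const ε))

lemma hfun_cont : Continuous (hfun β ε) :=
  continuous_const.min ((continuous_const.max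
    ((continuous_const.sub continuous_id).div_const ε)).max
    ((continuous_id.sub continuous_const).div_const ε))

variable {β ε : ℝ}

lemma gfun_nonneg (t : ℝ) : 0 ≤ gfun β ε t := le_max_left _ _

lemma gfun_le_one (t : ℝ) : gfun β ε t ≤ 1 := by
  unfold gfun
  apply max_le (by norm_num)
  exact le_trans (min_le_left _ _) (min_le_left _ _)

lemma gfun_eq_zero (hε : 0 < ε) {t : ℝ} (ht : β < t) : gfun β ε t = 0 := by
  unfold gfun
  apply max_eq_left
  apply le_trans (min_le_right _ _)
  apply div_nonpos_of_nonpos_of_nonneg (by linarith) hε.le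

lemma gfun_per (hε : 0 < ε) (hβ0 : 0 ≤ β) (hβ1 : β < 1) : gfun β ε 0 = gfun β ε 1 := by
  rw [gfun_eq_zero hε hβ1]
  unfold gfun
  apply max_eq_left
  apply le_trans (min_le_left _ _)
  apply le_trans (min_le_right _ _)
  simp

lemma gfun_eq_one (hε : 0 < ε) {t : ℝ} (h1 : ε ≤ t) (h2 : t ≤ β - ε) : gfun β ε t = 1 := by
  unfold gfun
  have ha : (1:ℝ) ≤ t/ε := (le_div_iff₀ hε).mpr (by linarith)
  have hb : (1:ℝ) ≤ (β - t)/ε := (le_div_iff₀ hε).mpr (by linarith)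
  rw [min_eq_left ha, min_eq_left hb]
  exact max_eq_right zero_le_one

lemma hfun_le_one (t : ℝ) : hfun β ε t ≤ 1 := min_le_left _ _

lemma hfun_nonneg (t : ℝ) : 0 ≤ hfun β ε t := by
  unfold hfun
  exact le_min zero_le_one (le_trans (le_max_left _ _) (le_max_left _ _))

lemma hfun_eq_one (hε : 0 < ε) {t : ℝ} (ht : t ≤ β) : hfun β ε t = 1 := by
  unfold hfun
  apply min_eq_left
  apply le_trans _ (le_max_left _ _)
  apply le_trans _ (le_max_right _ _)
  exact (le_div_iff₀ hε).mpr (by linarith)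

lemma hfun_eq_one' (hε : 0 < ε) {t : ℝ} (ht : 1 ≤ t) : hfun β ε t = 1 := by
  unfold hfun
  apply min_eq_left
  apply le_trans _ (le_max_right _ _)
  exact (le_div_iff₀ hε).mpr (by linarith)

lemma hfun_per (hε : 0 < ε) (hβ0 : 0 ≤ β) : hfun β ε 0 = hfun β ε 1 := by
  rw [hfun_eq_one hε hβ0, hfun_eq_one' hε le_rfl]

lemma hfun_eq_zero (hε : 0 < ε) {t : ℝ} (h1 : β + ε ≤ t) (h2 : t ≤ 1 - ε) : hfun β ε t = 0 := by
  unfold hfun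
  have hA : (β + ε - t)/ε ≤ 0 := div_nonpos_of_nonpos_of_nonneg (by linarith) hε.le
  have hB : (t - (1 - ε))/ε ≤ 0 := div_nonpos_of_nonpos_of_nonneg (by linarith) hε.le
  rw [max_eq_left hA, max_eq_left hB, min_eq_right zero_le_one]

lemma gfun_integral_ge (hε : 0 < ε) (hβ0 : 0 ≤ β) (hβ1 : β ≤ 1) :
    β - 2*ε ≤ ∫ t in (0:ℝ)..1, gfun β ε t := by
  have hint : ∀ a b : ℝ, IntervalIntegrable (gfun β ε) volume a b :=
    fun a b => (gfun_cont β ε).intervalIntegrable a b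
  rcases le_or_gt β (2*ε) with hc | hc
  · have h0 : (0:ℝ) ≤ ∫ t in (0:ℝ)..1, gfun β ε t :=
      intervalIntegral.integral_nonneg (by norm_num) (fun t _ => gfun_nonneg t)
    linarith
  · have h1 : ε ≤ β - ε := by linarith
    have h2 : β - ε ≤ 1 := by linarith
    have e1 : (∫ t in (0:ℝ)..ε, gfun β ε t) + (∫ t in ε..(β-ε), gfun β ε t)
        = ∫ t in (0:ℝ)..(β-ε), gfun β ε t :=
      intervalIntegral.integral_add_adjacent_intervals (hint _ _) (hint _ _)
    have e2 : (∫ t in (0:ℝ)..(β-ε), gfun β ε t) + (∫ t in (β-ε)..1, gfun β ε t)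
        = ∫ t in (0:ℝ)..1, gfun β ε t :=
      intervalIntegral.integral_add_adjacent_intervals (hint _ _) (hint _ _)
    have hmid : (∫ t in ε..(β-ε), gfun β ε t) = β - 2*ε := by
      rw [intervalIntegral.integral_congr (g := fun _ => (1:ℝ))
        (fun t ht => by
          rw [Set.uIcc_of_le h1] at ht
          exact gfun_eq_one hε ht.1 ht.2)]
      rw [intervalIntegral.integral_const]
      simp
      ring
    have hpos1 : (0:ℝ) ≤ ∫ t in (0:ℝ)..ε, gfun β ε t :=
      intervalIntegral.integral_nonneg hε.le (fun t _ => gfun_nonneg t)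
    have hpos2 : (0:ℝ) ≤ ∫ t in (β-ε)..1, gfun β ε t :=
      intervalIntegral.integral_nonneg h2 (fun t _ => gfun_nonneg t)
    linarith

lemma hfun_integral_le (hε : 0 < ε) (hβ0 : 0 ≤ β) (hc : β + ε ≤ 1 - ε) :
    (∫ t in (0:ℝ)..1, hfun β ε t) ≤ β + 2*ε := by
  have hint : ∀ a b : ℝ, IntervalIntegrable (hfun β ε) volume a b :=
    fun a b => (hfun_cont β ε).intervalIntegrable a b
  have e1 : (∫ t in (0:ℝ)..(β+ε), hfun β ε t) + (∫ t in (β+ε)..(1-ε), hfun β ε t)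
      = ∫ t in (0:ℝ)..(1-ε), hfun β ε t :=
    intervalIntegral.integral_add_adjacent_intervals (hint _ _) (hint _ _)
  have e2 : (∫ t in (0:ℝ)..(1-ε), hfun β ε t) + (∫ t in (1-ε)..1, hfun β ε t)
      = ∫ t in (0:ℝ)..1, hfun β ε t :=
    intervalIntegral.integral_add_adjacent_intervals (hint _ _) (hint _ _)
  have hb1 : (∫ t in (0:ℝ)..(β+ε), hfun β ε t) ≤ β + ε := by
    have := intervalIntegral.integral_mono_on (by linarith : (0:ℝ) ≤ β + ε)
      (hint 0 (β+ε)) (intervalIntegrable_const (c := (1:ℝ)))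
      (fun t _ => hfun_le_one t)
    rw [intervalIntegral.integral_const] at this
    simpa using this
  have hb2 : (∫ t in (β+ε)..(1-ε), hfun β ε t) = 0 := by
    rw [intervalIntegral.integral_congr (g := fun _ => (0:ℝ))
      (fun t ht => by
        rw [Set.uIcc_of_le hc] at ht
        exact hfun_eq_zero hε ht.1 ht.2)]
    simp
  have hb3 : (∫ t in (1-ε)..1, hfun β ε t) ≤ ε := by
    have := intervalIntegral.integral_mono_on (by linarith : (1:ℝ)-ε ≤ 1)
      (hint (1-ε) 1) (intervalIntegrable_const (c := (1:ℝ)))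
      (fun t _ => hfun_le_one t)
    rw [intervalIntegral.integral_const] at this
    simpa using this
  linarith

end approx

open scoped Classical in
lemma equidist_of_irrational {α : ℝ} (hα : Irrational α) :
    EquidistFract (fun n : ℕ => n * α) := by
  intro β hβ
  obtain ⟨hβ0, hβ1⟩ := hβ
  simp only
  rcases eq_or_lt_of_le hβ1 with hb1 | hb1
  · -- β = 1
    subst hb1
    have hfull : ∀ N : ℕ, ((Finset.Icc 1 N).filter
        (fun n : ℕ => Int.fract ((n:ℝ) * α) ≤ (1:ℝ))).card = N := by
      intro N
      rw [Finset.filter_true_of_mem (fun n _ => (Int.fract_lt_one _).le)]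
      rw [Nat.card_Icc]
      omega
    have heq : ∀ᶠ N : ℕ in atTop,
        ((((Finset.Icc 1 N).filter (fun n : ℕ => Int.fract ((n:ℝ) * α) ≤ (1:ℝ))).card : ℝ) / N)
          = 1 := by
      filter_upwards [eventually_ge_atTop 1] with N hN
      rw [hfull]
      have hN0 : (N:ℝ) ≠ 0 := Nat.cast_ne_zero.mpr (by omega)
      field_simp
    exact Tendsto.congr' (heq.mono fun N h => h.symm) tendsto_const_nhds
  · rw [Metric.tendsto_atTop]
    intro δ hδ
    set ε : ℝ := min ((1-β)/2) (δ/4) with hεdef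
    have hε : 0 < ε := lt_min (by linarith) (by linarith)
    have hε1 : ε ≤ (1-β)/2 := min_le_left _ _
    have hε2 : ε ≤ δ/4 := min_le_right _ _
    -- tendsto for g and h
    have hTg : Tendsto (fun N : ℕ => (∑ n ∈ Finset.Icc 1 N, gfun β ε (Int.fract (n * α))) / N)
        atTop (𝓝 (∫ t in (0:ℝ)..1, gfun β ε t)) :=
      avg_shift (weyl_real hα (gfun_cont β ε) (gfun_per hε hβ0 hb1))
    have hTh : Tendsto (fun N : ℕ => (∑ n ∈ Finset.Icc 1 N, hfun β ε (Int.fract (n * α))) / N)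
        atTop (𝓝 (∫ t in (0:ℝ)..1, hfun β ε t)) :=
      avg_shift (weyl_real hα (hfun_cont β ε) (hfun_per hε hβ0))
    have hIg : β - 2*ε ≤ ∫ t in (0:ℝ)..1, gfun β ε t := gfun_integral_ge hε hβ0 hβ1
    have hIh : (∫ t in (0:ℝ)..1, hfun β ε t) ≤ β + 2*ε :=
      hfun_integral_le hε hβ0 (by linarith)
    rw [Metric.tendsto_atTop] at hTg hTh
    obtain ⟨M₁, hM₁⟩ := hTg (δ/4) (by linarith)
    obtain ⟨M₂, hM₂⟩ := hTh (δ/4) (by linarith)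
    refine ⟨max (max M₁ M₂) 1, fun N hN => ?_⟩
    have hN1 : 1 ≤ N := le_trans (le_max_right _ 1) hN
    have hNM₁ : M₁ ≤ N := le_trans ((le_max_left M₁ M₂).trans (le_max_left _ 1)) hN
    have hNM₂ : M₂ ≤ N := le_trans ((le_max_right M₁ M₂).trans (le_max_left _ 1)) hN
    have hNpos : (0:ℝ) < N := by exact_mod_cast hN1
    set S : ℝ := (((Finset.Icc 1 N).filter (fun n : ℕ => Int.fract ((n:ℝ) * α) ≤ β)).card : ℝ)
      with hSdef
    have hcard : S = ∑ n ∈ Finset.Icc 1 N, (if Int.fract ((n:ℝ)*α) ≤ β then (1:ℝ) else 0) := by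
      rw [hSdef, Finset.card_filter, Nat.cast_sum]
      exact Finset.sum_congr rfl (fun n _ => by split <;> simp)
    have hlow : (∑ n ∈ Finset.Icc 1 N, gfun β ε (Int.fract ((n:ℝ) * α))) ≤ S := by
      rw [hcard]
      apply Finset.sum_le_sum
      intro n _
      by_cases h : Int.fract ((n:ℝ)*α) ≤ β
      · rw [if_pos h]; exact gfun_le_one _
      · rw [if_neg h]
        rw [gfun_eq_zero hε (not_le.mp h)]
    have hhigh : S ≤ ∑ n ∈ Finset.Icc 1 N, hfun β ε (Int.fract ((n:ℝ) * α)) := by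
      rw [hcard]
      apply Finset.sum_le_sum
      intro n _
      by_cases h : Int.fract ((n:ℝ)*α) ≤ β
      · rw [if_pos h, hfun_eq_one hε h]
      · rw [if_neg h]; exact hfun_nonneg _
    have hAlow : (∑ n ∈ Finset.Icc 1 N, gfun β ε (Int.fract ((n:ℝ) * α))) / N ≤ S / N :=
      div_le_div_of_nonneg_right hlow hNpos.le
    have hAhigh : S / N ≤ (∑ n ∈ Finset.Icc 1 N, hfun β ε (Int.fract ((n:ℝ) * α))) / N :=
      div_le_div_of_nonneg_right hhigh hNpos.le
    have hg' := hM₁ N hNM₁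
    have hh' := hM₂ N hNM₂
    rw [Real.dist_eq, abs_lt] at hg' hh' ⊢
    constructor
    · have : β - 2*ε - δ/4 < (∑ n ∈ Finset.Icc 1 N, gfun β ε (Int.fract ((n:ℝ) * α))) / N := by
        linarith [hg'.1]
      linarith
    · have : (∑ n ∈ Finset.Icc 1 N, hfun β ε (Int.fract ((n:ℝ) * α))) / N < β + 2*ε + δ/4 := by
        linarith [hh'.2]
      linarith


end

end WeylAux

/-- For an integer `a > 1`, the fractional parts of `n·log_φ a` are equidistributed. -/
theorem equidist_n_logPhi
    (φ : ℝ) (hφ : φ = (1 + Real.sqrt 5) / 2)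
    (a : ℕ) (ha : 1 < a) :
    EquidistFract (fun n : ℕ => n * (Real.log a / Real.log φ)) := by
  have hα : Irrational (Real.log a / Real.log φ) := by
    rw [show φ = Real.goldenRatio from hφ]
    exact irrational_log_div_log_gold ha
  exact equidist_of_irrational hα
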